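/- Let N ≥ 2. There exists a constant S_N > 0, depending only on the dimension N, with the following property: for every bounded open set D ⊆ ℝ^N, every ε > 0, and every Lipschitz function u : ℝ^N → ℝ with compact support contained in D and 0 ≤ u ≤ 1 everywhere, one has S_N · ( ∫_D u^{2N/(N−1)} dx )^{(N−1)/N} ≤ ε ∫_D |∇u|² dx + (9/ε) ∫_D u²(1−u)² dx. (The proof combines the Young inequality 2ab ≤ εa² + b²/ε, the chain rule identity |∇(u²/2 − u³/3)| = |∇u|·u(1−u), the Gagliardo–Nirenberg–Sobolev inequality ‖v‖_{L^{N/(N−1)}} ≤ c_N ∫|∇v| for compactly supported v, and the pointwise bound t²/2 − t³/3 ≥ t²/6 on [0,1].) -/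

import Mathlib

open MeasureTheory Metric Set Filter Function
open scoped ENNReal NNReal Topology symmDiff

noncomputable section

/-- Euclidean space ℝ^N. -/
abbrev Euc (N : ℕ) : Type := EuclideanSpace ℝ (Fin N)

/-- The essential (measure-theoretic) boundary of a measurable set: the set of
points at which the Lebesgue density of the set is neither 0 nor 1 (including
points where the density does not exist). -/
def essBoundary (N : ℕ) (Ω : Set (Euc N)) : Set (Euc N) :=
  {x | ¬ Tendsto (fun ρ : ℝ => volume (Ω ∩ ball x ρ) / volume (ball x ρ)) (𝓝[>] 0) (𝓝 0) ∧
       ¬ Tendsto (fun ρ : ℝ => volume (Ω ∩ ball x ρ) / volume (ball x ρ)) (𝓝[>] 0) (𝓝 1)}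

/-- The perimeter of a set: the (N-1)-dimensional Hausdorff measure of its
essential boundary (which agrees with the reduced boundary up to ℋ^{N-1}-null
sets, by Federer's theorem). -/
def perim (N : ℕ) (Ω : Set (Euc N)) : ℝ≥0∞ :=
  μH[(N : ℝ) - 1] (essBoundary N Ω)

/-- The α-Cheeger ratio P(Ω)/|Ω|^α, with the convention that it equals +∞ when
Ω is Lebesgue-null (the case of infinite perimeter being handled automatically
by the ℝ≥0∞-valued arithmetic). -/
def cheegerRatio (N : ℕ) (α : ℝ) (Ω : Set (Euc N)) : ℝ≥0∞ :=
  if volume Ω = 0 then ∞ else perim N Ω / (volume Ω) ^ α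

/-- The isoperimetric constant ω_N = P(B)/|B|^{(N-1)/N} for a ball B ⊂ ℝ^N. -/
def omegaN (N : ℕ) : ℝ≥0∞ :=
  perim N (ball (0 : Euc N) 1) / (volume (ball (0 : Euc N) 1)) ^ (((N : ℝ) - 1) / N)

/-- The ω_N-normalized α-Cheeger ratio P(Ω)/(ω_N |Ω|^α), equal to +∞ when |Ω| = 0. -/
def cheegerRatioW (N : ℕ) (α : ℝ) (Ω : Set (Euc N)) : ℝ≥0∞ :=
  if volume Ω = 0 then ∞ else perim N Ω / (omegaN N * (volume Ω) ^ α)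

/-- 𝒫_k(D): k-tuples of pairwise disjoint measurable subsets of D. -/
def IsCluster {N : ℕ} (D : Set (Euc N)) {k : ℕ} (Ω : Fin k → Set (Euc N)) : Prop :=
  (∀ i, Ω i ⊆ D) ∧ (∀ i, MeasurableSet (Ω i)) ∧ Pairwise (Disjoint on Ω)

section AuxSobolev
open Module
open scoped Convolution Pointwise

lemma integrable_of_bdd_compact {N : ℕ} {f : Euc N → ℝ} {s : Set (Euc N)}
    (hm : AEStronglyMeasurable f volume) (hs : support f ⊆ s) (hsc : IsCompact s)
    {M : ℝ} (hM : ∀ x, |f x| ≤ M) : Integrable f := by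
  refine Integrable.mono' (g := s.indicator fun _ => M) ?_ hm ?_
  · exact (integrableOn_const hsc.measure_lt_top.ne).integrable_indicator
      hsc.measurableSet
  · refine Eventually.of_forall fun x => ?_
    by_cases hx : x ∈ s
    · simpa [indicator_of_mem hx] using hM x
    · have : f x = 0 := by
        by_contra h; exact hx (hs (mem_support.2 h))
      simp [indicator_of_notMem hx, this]

/-- Cauchy-Schwarz / Jensen for a probability weight. -/
lemma sq_integral_mul_le {N : ℕ} {χ h : Euc N → ℝ} (hχi : Integrable χ)
    (hχ0 : ∀ x, 0 ≤ χ x) (hχ1 : ∫ x, χ x = 1)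
    (hhm : AEStronglyMeasurable h volume) (hh0 : ∀ x, 0 ≤ h x) {M : ℝ}
    (hhM : ∀ x, h x ≤ M) :
    (∫ x, χ x * h x) ^ 2 ≤ ∫ x, χ x * (h x) ^ 2 := by
  have hM0 : 0 ≤ M := le_trans (hh0 0) (hhM 0)
  have hi1 : Integrable (fun x => χ x * h x) := by
    refine (hχi.const_mul M).mono' (hχi.aestronglyMeasurable.mul hhm) ?_
    refine Eventually.of_forall fun x => ?_
    rw [Real.norm_eq_abs, abs_mul, abs_of_nonneg (hχ0 x), abs_of_nonneg (hh0 x)]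
    calc χ x * h x ≤ χ x * M := by nlinarith [hχ0 x, hhM x, hh0 x]
      _ = M * χ x := mul_comm _ _
  have hi2 : Integrable (fun x => χ x * (h x) ^ 2) := by
    refine (hχi.const_mul (M^2)).mono' (hχi.aestronglyMeasurable.mul (hhm.mul hhm |>.congr ?_)) ?_
    · exact Eventually.of_forall fun x => (sq (h x)).symm
    refine Eventually.of_forall fun x => ?_
    rw [Real.norm_eq_abs, abs_mul, abs_of_nonneg (hχ0 x), abs_of_nonneg (sq_nonneg (h x))]
    calc χ x * (h x) ^ 2 ≤ χ x * M ^ 2 :=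
          mul_le_mul_of_nonneg_left (pow_le_pow_left₀ (hh0 x) (hhM x) 2) (hχ0 x)
      _ = M ^ 2 * χ x := mul_comm _ _
  set m := ∫ x, χ x * h x with hm
  have key : 0 ≤ ∫ x, χ x * (h x - m) ^ 2 :=
    integral_nonneg fun x => mul_nonneg (hχ0 x) (sq_nonneg _)
  have expand : ∫ x, χ x * (h x - m) ^ 2
      = (∫ x, χ x * (h x) ^ 2) - 2 * m * (∫ x, χ x * h x) + m ^ 2 * ∫ x, χ x := by
    have : ∀ x, χ x * (h x - m) ^ 2
        = χ x * (h x) ^ 2 - (2 * m) * (χ x * h x) + m ^ 2 * χ x := fun x => by ring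
    calc ∫ x, χ x * (h x - m) ^ 2
        = ∫ x, (χ x * (h x) ^ 2 - (2 * m) * (χ x * h x) + m ^ 2 * χ x) := by
          exact integral_congr_ae (Eventually.of_forall this)
      _ = (∫ x, (χ x * (h x) ^ 2 - (2 * m) * (χ x * h x))) + ∫ x, m ^ 2 * χ x :=
          integral_add (hi2.sub (hi1.const_mul _)) (hχi.const_mul _)
      _ = (∫ x, χ x * (h x) ^ 2) - 2 * m * (∫ x, χ x * h x) + m ^ 2 * ∫ x, χ x := by
          rw [integral_sub hi2 (hi1.const_mul _), integral_const_mul, integral_const_mul]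
  rw [expand, hχ1] at key
  nlinarith [key]

lemma conv_integrand_integrable {N : ℕ} (φ : ContDiffBump (0 : Euc N)) {u : Euc N → ℝ}
    (hu : Continuous u) (h0 : ∀ y, 0 ≤ u y) (h1 : ∀ y, u y ≤ 1) (z : Euc N) :
    Integrable (fun t => φ.normed volume t * u (z - t)) := by
  refine φ.integrable_normed.mono'
    ((φ.contDiff_normed (n := 1)).continuous.aestronglyMeasurable.mul
      ((hu.comp (continuous_const.sub continuous_id)).aestronglyMeasurable)) ?_
  refine Eventually.of_forall fun t => ?_
  rw [Real.norm_eq_abs, abs_mul, abs_of_nonneg (φ.nonneg_normed t), abs_of_nonneg (h0 _)]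
  nlinarith [φ.nonneg_normed (μ := volume) t, h1 (z - t), h0 (z - t)]

lemma fderiv_conv_apply {N : ℕ} (φ : ContDiffBump (0 : Euc N)) {u : Euc N → ℝ} {K : ℝ≥0}
    (hL : LipschitzWith K u) (h0 : ∀ y, 0 ≤ u y) (h1 : ∀ y, u y ≤ 1) (x e : Euc N) :
    fderiv ℝ (φ.normed volume ⋆[ContinuousLinearMap.lsmul ℝ ℝ] u) x e
      = ∫ t, φ.normed volume t * (fderiv ℝ u (x - t) e) := by
  set χ := φ.normed volume with hχ
  set w := χ ⋆[ContinuousLinearMap.lsmul ℝ ℝ] u with hw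
  have hu : Continuous u := hL.continuous
  have hχi : Integrable χ := φ.integrable_normed
  have hχc : Continuous χ := (φ.contDiff_normed (n := 1)).continuous
  have hwc : ContDiff ℝ 1 w :=
    (φ.hasCompactSupport_normed).contDiff_convolution_left _ φ.contDiff_normed
      hu.locallyIntegrable
  have hwx : ∀ z : Euc N, w z = ∫ t, χ t * u (z - t) := by
    intro z; simp [hw, convolution, ContinuousLinearMap.lsmul_apply]
  -- T1: slope of w along direction e tends to fderiv w x e
  have hdiff : HasFDerivAt w (fderiv ℝ w x) x :=
    ((hwc.differentiable one_ne_zero) x).hasFDerivAt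
  have hc : HasDerivAt (fun s : ℝ => x + s • e) e 0 := by
    simpa using ((hasDerivAt_id (0:ℝ)).smul_const e).const_add x
  have h1' : HasDerivAt (fun s : ℝ => w (x + s • e)) (fderiv ℝ w x e) 0 := by
    have hx0 : x + (0:ℝ) • e = x := by simp
    have hdiff' : HasFDerivAt w (fderiv ℝ w x) (x + (0:ℝ) • e) := by rw [hx0]; exact hdiff
    exact hdiff'.comp_hasDerivAt 0 hc
  have T1 : Tendsto (fun t : ℝ => t⁻¹ * (w (x + t • e) - w x)) (𝓝[≠] (0:ℝ))
      (𝓝 (fderiv ℝ w x e)) := by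
    have := (hasDerivAt_iff_tendsto_slope.1 h1')
    refine this.congr (fun t => ?_)
    simp [slope_def_field, div_eq_inv_mul]
  -- T2: the same slope tends to the convolution of φ with the directional derivative
  have key : ∀ t : ℝ, t⁻¹ * (w (x + t • e) - w x)
      = ∫ y, χ y * (t⁻¹ * (u (x + t • e - y) - u (x - y))) := by
    intro t
    rw [hwx, hwx, ← integral_sub (conv_integrand_integrable φ hu h0 h1 _)
      (conv_integrand_integrable φ hu h0 h1 _), ← integral_const_mul]
    congr 1; ext y; ring
  have T2 : Tendsto (fun t : ℝ => t⁻¹ * (w (x + t • e) - w x)) (𝓝[≠] (0:ℝ))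
      (𝓝 (∫ y, χ y * (fderiv ℝ u (x - y) e))) := by
    simp_rw [key]
    refine tendsto_integral_filter_of_dominated_convergence
      (fun y => χ y * ((K : ℝ) * ‖e‖)) ?_ ?_ (hχi.mul_const _) ?_
    · refine Eventually.of_forall fun t => ?_
      exact (hχc.mul (continuous_const.mul
        ((hu.comp ((continuous_const.sub continuous_id))).sub
          (hu.comp (continuous_const.sub continuous_id))))).aestronglyMeasurable
    · filter_upwards [self_mem_nhdsWithin] with t (ht : t ≠ 0)
      refine Eventually.of_forall fun y => ?_
      rw [Real.norm_eq_abs, abs_mul, abs_of_nonneg (φ.nonneg_normed y)]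
      refine mul_le_mul_of_nonneg_left ?_ (φ.nonneg_normed y)
      rw [abs_mul, abs_inv]
      have hd : |u (x + t • e - y) - u (x - y)| ≤ (K : ℝ) * (|t| * ‖e‖) := by
        have := hL.dist_le_mul (x + t • e - y) (x - y)
        rw [Real.dist_eq] at this
        refine this.trans ?_
        have : dist (x + t • e - y) (x - y) = ‖t • e‖ := by
          rw [dist_eq_norm]; congr 1; abel
        rw [this, norm_smul]; simp [Real.norm_eq_abs]
      calc |t|⁻¹ * |u (x + t • e - y) - u (x - y)| ≤ |t|⁻¹ * ((K:ℝ) * (|t| * ‖e‖)) := by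
            exact mul_le_mul_of_nonneg_left hd (by positivity)
        _ = (K:ℝ) * ‖e‖ := by
            field_simp
    · -- a.e. convergence
      have hae : ∀ᵐ y : Euc N, DifferentiableAt ℝ u (x - y) := by
        have h1 : MeasurePreserving (fun y : Euc N => x + (-y)) volume volume :=
          (measurePreserving_add_left (volume : Measure (Euc N)) x).comp
            (Measure.measurePreserving_neg _)
        have := h1.quasiMeasurePreserving.ae hL.ae_differentiableAt
        simpa [sub_eq_add_neg] using this
      filter_upwards [hae] with y hy
      have hder : HasDerivAt (fun s : ℝ => u ((x - y) + s • e)) (fderiv ℝ u (x - y) e) 0 := by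
        have hx0 : (x - y) + (0:ℝ) • e = x - y := by simp
        have hc2 : HasDerivAt (fun s : ℝ => (x - y) + s • e) e 0 := by
          simpa using ((hasDerivAt_id (0:ℝ)).smul_const e).const_add (x - y)
        have hdiff2 : HasFDerivAt u (fderiv ℝ u (x - y)) ((x - y) + (0:ℝ) • e) := by
          rw [hx0]; exact hy.hasFDerivAt
        exact hdiff2.comp_hasDerivAt 0 hc2
      have := (hasDerivAt_iff_tendsto_slope.1 hder)
      have hslope : Tendsto (fun t : ℝ => t⁻¹ * (u ((x - y) + t • e) - u (x - y)))
          (𝓝[≠] (0:ℝ)) (𝓝 (fderiv ℝ u (x - y) e)) := by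
        refine this.congr fun t => ?_
        simp [slope_def_field, div_eq_inv_mul]
      have heq : ∀ t : ℝ, u (x + t • e - y) = u ((x - y) + t • e) := fun t => by
        congr 1; abel
      simp_rw [heq]
      exact (hslope.const_mul (χ y))
  exact tendsto_nhds_unique T1 T2

lemma grad_sq_bound {N : ℕ} (φ : ContDiffBump (0 : Euc N)) {u : Euc N → ℝ} {K : ℝ≥0}
    (hL : LipschitzWith K u) (hcu : HasCompactSupport u)
    (h0 : ∀ y, 0 ≤ u y) (h1 : ∀ y, u y ≤ 1) :
    ∫ x, ‖fderiv ℝ (φ.normed volume ⋆[ContinuousLinearMap.lsmul ℝ ℝ] u) x‖ ^ 2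
      ≤ ∫ x, ‖fderiv ℝ u x‖ ^ 2 := by
  set χ := φ.normed volume with hχ
  set w := χ ⋆[ContinuousLinearMap.lsmul ℝ ℝ] u with hw
  have hu : Continuous u := hL.continuous
  have hχi : Integrable χ := φ.integrable_normed
  have hχc : Continuous χ := (φ.contDiff_normed (n := 1)).continuous
  have hwc : ContDiff ℝ 1 w :=
    (φ.hasCompactSupport_normed).contDiff_convolution_left _ φ.contDiff_normed
      hu.locallyIntegrable
  have hwcpt : HasCompactSupport w := (φ.hasCompactSupport_normed).convolution _ hcu
  set g1 : Euc N → ℝ := fun z => ‖fderiv ℝ u z‖ with hg1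
  set g2 : Euc N → ℝ := fun z => g1 z ^ 2 with hg2
  have hg1m : Measurable g1 := (measurable_fderiv ℝ u).norm
  have hg1K : ∀ z, g1 z ≤ (K : ℝ) := fun z => norm_fderiv_le_of_lipschitz ℝ hL
  have hg1supp : support g1 ⊆ tsupport u := by
    intro z hz
    have : fderiv ℝ u z ≠ 0 := by
      simp only [hg1, mem_support] at hz
      intro h; rw [h] at hz; simp at hz
    exact support_fderiv_subset ℝ (mem_support.2 this)
  have hg2i : Integrable g2 := by
    refine integrable_of_bdd_compact ((hg1m.pow_const 2).aestronglyMeasurable) ?_ hcu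
      (M := (K:ℝ)^2) ?_
    · intro z hz
      apply hg1supp
      simp only [hg2, mem_support] at hz ⊢
      intro h; rw [h] at hz; simp at hz
    · intro z
      rw [abs_of_nonneg (by positivity)]
      exact pow_le_pow_left₀ (norm_nonneg _) (hg1K z) 2
  -- pointwise bound
  have hpt : ∀ x, ‖fderiv ℝ w x‖ ^ 2 ≤ (χ ⋆[ContinuousLinearMap.lsmul ℝ ℝ] g2) x := by
    intro x
    have hF0 : 0 ≤ ∫ t, χ t * g1 (x - t) :=
      integral_nonneg fun t => mul_nonneg (φ.nonneg_normed t) (norm_nonneg _)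
    have hbd : ‖fderiv ℝ w x‖ ≤ ∫ t, χ t * g1 (x - t) := by
      refine ContinuousLinearMap.opNorm_le_bound _ hF0 fun e => ?_
      rw [fderiv_conv_apply φ hL h0 h1 x e]
      have : ‖∫ t, χ t * (fderiv ℝ u (x - t) e)‖ ≤ ∫ t, (χ t * g1 (x - t)) * ‖e‖ := by
        refine norm_integral_le_of_norm_le ?_ (Eventually.of_forall fun t => ?_)
        · have : Integrable (fun t => χ t * ((K:ℝ) * ‖e‖)) := hχi.mul_const _
          refine this.mono' ?_ (Eventually.of_forall fun t => ?_)
          · exact (hχc.aestronglyMeasurable.mul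
              ((hg1m.comp (measurable_const.sub measurable_id)).aestronglyMeasurable)).mul
              aestronglyMeasurable_const
          · rw [Real.norm_eq_abs, abs_mul, abs_mul, abs_of_nonneg (φ.nonneg_normed t),
              abs_of_nonneg (norm_nonneg _), abs_of_nonneg (norm_nonneg _)]
            have hn : (0:ℝ) ≤ ‖e‖ := norm_nonneg e
            show φ.normed volume t * ‖fderiv ℝ u (x - t)‖ * ‖e‖ ≤ χ t * ((K:ℝ) * ‖e‖)
            rw [mul_assoc]
            exact mul_le_mul_of_nonneg_left
              (mul_le_mul_of_nonneg_right (hg1K (x - t)) hn) (φ.nonneg_normed t)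
        · rw [Real.norm_eq_abs, abs_mul, abs_of_nonneg (φ.nonneg_normed t)]
          rw [mul_assoc]
          refine mul_le_mul_of_nonneg_left ?_ (φ.nonneg_normed t)
          rw [← Real.norm_eq_abs]
          exact ContinuousLinearMap.le_opNorm _ e
      refine this.trans ?_
      rw [integral_mul_const]
    have hcs : (∫ t, χ t * g1 (x - t)) ^ 2 ≤ ∫ t, χ t * (g1 (x - t)) ^ 2 := by
      refine sq_integral_mul_le hχi φ.nonneg_normed φ.integral_normed
        ((hg1m.comp (measurable_const.sub measurable_id)).aestronglyMeasurable)
        (fun t => norm_nonneg _) (M := (K:ℝ)) (fun t => hg1K _)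
    have hconv_eq : (χ ⋆[ContinuousLinearMap.lsmul ℝ ℝ] g2) x = ∫ t, χ t * (g1 (x - t)) ^ 2 := by
      simp [convolution, ContinuousLinearMap.lsmul_apply, hg2]
    rw [hconv_eq]
    exact le_trans (pow_le_pow_left₀ (norm_nonneg _) hbd 2) hcs
  -- integrate
  have hwi : Integrable (fun x => ‖fderiv ℝ w x‖ ^ 2) := by
    have hfc : Continuous (fun x => ‖fderiv ℝ w x‖ ^ 2) :=
      ((hwc.continuous_fderiv one_ne_zero).norm).pow 2
    refine hfc.integrable_of_hasCompactSupport ?_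
    refine HasCompactSupport.intro hwcpt fun x hx => ?_
    have : fderiv ℝ w x = 0 := by
      by_contra h
      exact hx (support_fderiv_subset ℝ (mem_support.2 h))
    simp [this]
  have hconvi : Integrable (χ ⋆[ContinuousLinearMap.lsmul ℝ ℝ] g2) :=
    hχi.integrable_convolution _ hg2i
  calc ∫ x, ‖fderiv ℝ w x‖ ^ 2 ≤ ∫ x, (χ ⋆[ContinuousLinearMap.lsmul ℝ ℝ] g2) x :=
        integral_mono hwi hconvi hpt
    _ = ∫ x, g2 x := by
        rw [integral_convolution _ hχi hg2i]
        simp [hχ, φ.integral_normed]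
    _ = ∫ x, ‖fderiv ℝ u x‖ ^ 2 := rfl

set_option maxHeartbeats 1000000 in
lemma smooth_case (N : ℕ) (hN : 2 ≤ N) :
    ∃ S : ℝ, 0 < S ∧ ∀ (u : Euc N → ℝ), ContDiff ℝ 1 u → HasCompactSupport u →
      (∀ y, 0 ≤ u y) → (∀ y, u y ≤ 1) → ∀ ε : ℝ, 0 < ε →
      S * (∫ y, u y ^ ((2 * (N:ℝ)) / ((N:ℝ) - 1))) ^ (((N:ℝ) - 1) / (N:ℝ))
        ≤ ε * (∫ y, ‖fderiv ℝ u y‖ ^ 2) + (9 / ε) * ∫ y, (u y) ^ 2 * (1 - u y) ^ 2 := by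
  have hN1 : (1:ℝ) < (N:ℝ) := by exact_mod_cast lt_of_lt_of_le one_lt_two hN
  have hNpos : (0:ℝ) < (N:ℝ) - 1 := by linarith
  set p : ℝ := (N:ℝ) / ((N:ℝ) - 1) with hpdef
  have hp1 : 1 < p := by
    rw [hpdef, lt_div_iff₀ hNpos]; linarith
  have hp0 : 0 < p := lt_trans one_pos hp1
  have hp : Real.HolderConjugate (N:ℝ) p := by
    rw [Real.holderConjugate_iff]
    constructor
    · exact hN1
    · rw [hpdef]; field_simp; ring
  set C : ℝ≥0 := lintegralPowLePowLIntegralFDerivConst (volume : Measure (Euc N)) p with hC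
  refine ⟨(6 * ((C:ℝ) + 1) ^ (1/p))⁻¹, by positivity, ?_⟩
  intro u hu hcu h0 h1 ε hε
  set q : ℝ := (2 * (N:ℝ)) / ((N:ℝ) - 1) with hqdef
  have hq2p : q = 2 * p := by rw [hqdef, hpdef]; ring
  have hq0 : (0:ℝ) ≤ q := by rw [hq2p]; positivity
  have hinvp : ((N:ℝ) - 1) / (N:ℝ) = 1 / p := by
    rw [hpdef]; field_simp
  -- the auxiliary function v
  set v : Euc N → ℝ := fun x => (u x) ^ 2 / 2 - (u x) ^ 3 / 3 with hvdef
  have hv0 : ∀ x, 0 ≤ v x := fun x => by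
    have := h0 x; have := h1 x; rw [hvdef]; nlinarith
  have hv6 : ∀ x, (u x) ^ 2 ≤ 6 * v x := fun x => by
    have := h0 x; have := h1 x; rw [hvdef]; nlinarith
  have hvC : ContDiff ℝ 1 v := ((hu.pow 2).div_const 2).sub ((hu.pow 3).div_const 3)
  have hvcs : HasCompactSupport v := by
    have : v = (fun t : ℝ => t ^ 2 / 2 - t ^ 3 / 3) ∘ u := rfl
    rw [this]
    exact hcu.comp_left (by norm_num)
  have hDv : ∀ x, fderiv ℝ v x = (u x - (u x) ^ 2) • fderiv ℝ u x := by
    intro x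
    have hψ : HasDerivAt (fun t : ℝ => t ^ 2 / 2 - t ^ 3 / 3) (u x - (u x) ^ 2) (u x) := by
      have : HasDerivAt (fun t : ℝ => t ^ 2 / 2 - t ^ 3 / 3) _ (u x) := ((hasDerivAt_pow 2 (u x)).div_const 2).sub ((hasDerivAt_pow 3 (u x)).div_const 3)
      convert this using 1
      push_cast
      ring
    exact (hψ.comp_hasFDerivAt x ((hu.differentiable one_ne_zero) x).hasFDerivAt).fderiv
  have hnDv : ∀ x, ‖fderiv ℝ v x‖ = u x * (1 - u x) * ‖fderiv ℝ u x‖ := by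
    intro x
    rw [hDv x, norm_smul, Real.norm_eq_abs, abs_of_nonneg (by nlinarith [h0 x, h1 x])]
    ring
  -- GNS
  have hGNS := lintegral_pow_le_pow_lintegral_fderiv (volume : Measure (Euc N)) hvC hvcs
    (p := p) (by rw [finrank_euclideanSpace_fin]; exact hp)
  set J : ℝ≥0∞ := ∫⁻ x, ‖fderiv ℝ v x‖₊ with hJ
  set I : ℝ≥0∞ := ∫⁻ x, ENNReal.ofReal (u x ^ q) with hI
  -- Step 1 : I ≤ 6^p * ∫⁻ ‖v‖₊ ^ p
  have step1 : I ≤ (6:ℝ≥0∞) ^ p * ∫⁻ x, (‖v x‖₊ : ℝ≥0∞) ^ p := by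
    rw [hI, ← lintegral_const_mul' _ _ (by simp : ((6:ℝ≥0∞) ^ p) ≠ ∞)]
    refine lintegral_mono fun x => ?_
    have e1 : u x ^ q = ((u x) ^ (2:ℕ) : ℝ) ^ p := by
      rw [hq2p, ← Real.rpow_natCast (u x) 2, ← Real.rpow_mul (h0 x)]
      norm_num [mul_comm]
    have e2 : ((u x) ^ (2:ℕ) : ℝ) ^ p ≤ (6 * v x) ^ p :=
      Real.rpow_le_rpow (by positivity) (hv6 x) (le_of_lt hp0)
    calc ENNReal.ofReal (u x ^ q) ≤ ENNReal.ofReal ((6 * v x) ^ p) := by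
          rw [e1]; exact ENNReal.ofReal_le_ofReal e2
      _ = (ENNReal.ofReal (6 * v x)) ^ p := by
          rw [ENNReal.ofReal_rpow_of_nonneg (by nlinarith [hv0 x]) (le_of_lt hp0)]
      _ = ((6:ℝ≥0∞) * ENNReal.ofReal (v x)) ^ p := by
          rw [ENNReal.ofReal_mul (by norm_num)]
          norm_num
      _ = (6:ℝ≥0∞) ^ p * (ENNReal.ofReal (v x)) ^ p := by
          rw [ENNReal.mul_rpow_of_nonneg _ _ (le_of_lt hp0)]
      _ = (6:ℝ≥0∞) ^ p * (‖v x‖₊ : ℝ≥0∞) ^ p := by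
          rw [← Real.enorm_eq_ofReal (hv0 x)]; rfl
  have step1' : I ≤ (6:ℝ≥0∞) ^ p * (C * J ^ p) :=
    step1.trans (mul_le_mul_right hGNS _)
  -- Step 2 : I^(1/p) ≤ 6 * C^(1/p) * J
  have step2 : I ^ (1/p) ≤ 6 * (C:ℝ≥0∞) ^ (1/p) * J := by
    have := ENNReal.rpow_le_rpow step1' (by positivity : (0:ℝ) ≤ 1/p)
    refine this.trans_eq ?_
    rw [ENNReal.mul_rpow_of_nonneg _ _ (by positivity), 
        ENNReal.mul_rpow_of_nonneg _ _ (by positivity),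
        ← ENNReal.rpow_mul, ← ENNReal.rpow_mul,
        mul_one_div_cancel (ne_of_gt hp0), ENNReal.rpow_one, ENNReal.rpow_one, mul_assoc]
  -- integrability
  have hAi : Integrable (fun x => ‖fderiv ℝ u x‖ ^ 2) := by
    have hfc : Continuous (fun x => ‖fderiv ℝ u x‖ ^ 2) :=
      ((hu.continuous_fderiv one_ne_zero).norm).pow 2
    refine hfc.integrable_of_hasCompactSupport ?_
    refine HasCompactSupport.intro hcu fun x hx => ?_
    have : fderiv ℝ u x = 0 := by
      by_contra h
      exact hx (support_fderiv_subset ℝ (mem_support.2 h))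
    simp [this]
  have hBi : Integrable (fun x => (u x) ^ 2 * (1 - u x) ^ 2) := by
    have hfc : Continuous (fun x => (u x) ^ 2 * (1 - u x) ^ 2) :=
      ((hu.continuous.pow 2).mul ((continuous_const.sub hu.continuous).pow 2))
    refine hfc.integrable_of_hasCompactSupport ?_
    refine HasCompactSupport.intro hcu fun x hx => ?_
    have : u x = 0 := by
      by_contra h
      exact hx (subset_tsupport u (mem_support.2 h))
    simp [this]
  set A : ℝ := ∫ x, ‖fderiv ℝ u x‖ ^ 2 with hA
  set B : ℝ := ∫ x, (u x) ^ 2 * (1 - u x) ^ 2 with hB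
  have hA0 : 0 ≤ A := integral_nonneg fun x => by positivity
  have hB0 : 0 ≤ B := integral_nonneg fun x => by positivity
  -- Step 3 : J ≤ ofReal (ε/2 * A + 1/(2*ε) * B)
  have step3 : J ≤ ENNReal.ofReal (ε/2 * A + 1/(2*ε) * B) := by
    have hRi : Integrable (fun x => ε/2 * ‖fderiv ℝ u x‖ ^ 2
        + 1/(2*ε) * ((u x) ^ 2 * (1 - u x) ^ 2)) :=
      (hAi.const_mul _).add (hBi.const_mul _)
    have young : ∀ x, ‖fderiv ℝ v x‖ ≤ ε/2 * ‖fderiv ℝ u x‖ ^ 2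
        + 1/(2*ε) * ((u x) ^ 2 * (1 - u x) ^ 2) := by
      intro x
      rw [hnDv x]
      set a := ‖fderiv ℝ u x‖ with ha
      set b := u x * (1 - u x) with hb
      have hab : (u x) ^ 2 * (1 - u x) ^ 2 = b ^ 2 := by rw [hb]; ring
      rw [hab]
      have h2 := sq_nonneg (ε * a - b)
      have key : ε/2 * a^2 + 1/(2*ε) * b^2 - b * a = (ε*a - b)^2/(2*ε) := by
        field_simp; ring
      have h4 : 0 ≤ (ε*a - b)^2/(2*ε) := div_nonneg h2 (by positivity)
      linarith
    calc J = ∫⁻ x, ENNReal.ofReal ‖fderiv ℝ v x‖ := by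
          rw [hJ]; congr 1; ext x; rw [ofReal_norm_eq_enorm]; rfl
      _ ≤ ∫⁻ x, ENNReal.ofReal (ε/2 * ‖fderiv ℝ u x‖ ^ 2
            + 1/(2*ε) * ((u x) ^ 2 * (1 - u x) ^ 2)) :=
          lintegral_mono fun x => ENNReal.ofReal_le_ofReal (young x)
      _ = ENNReal.ofReal (∫ x, (ε/2 * ‖fderiv ℝ u x‖ ^ 2
            + 1/(2*ε) * ((u x) ^ 2 * (1 - u x) ^ 2))) := by
          rw [← ofReal_integral_eq_lintegral_ofReal hRi
            (Eventually.of_forall fun x => by positivity)]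
      _ = ENNReal.ofReal (ε/2 * A + 1/(2*ε) * B) := by
          rw [integral_add (hAi.const_mul _) (hBi.const_mul _),
            integral_const_mul, integral_const_mul]
  -- Step 4: conclude
  set R : ℝ := ε/2 * A + 1/(2*ε) * B with hR
  have hR0 : 0 ≤ R := by positivity
  have finalE : I ^ (1/p) ≤ ENNReal.ofReal (6 * (C:ℝ) ^ (1/p) * R) := by
    refine step2.trans ?_
    rw [ENNReal.ofReal_mul (by positivity), ENNReal.ofReal_mul (by norm_num)]
    have e6 : ENNReal.ofReal (6:ℝ) = (6:ℝ≥0∞) := by norm_num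
    have eC : ENNReal.ofReal ((C:ℝ) ^ (1/p)) = (C:ℝ≥0∞) ^ (1/p) := by
      rw [← ENNReal.ofReal_rpow_of_nonneg (by positivity) (by positivity)]
      simp [ENNReal.ofReal_coe_nnreal]
    rw [e6, eC]
    exact mul_le_mul_right step3 _
  have hIq : ∫ y, u y ^ q = I.toReal := by
    rw [hI, integral_eq_lintegral_of_nonneg_ae
      (Eventually.of_forall fun x => Real.rpow_nonneg (h0 x) q)
      (((Real.continuous_rpow_const hq0).comp hu.continuous).aestronglyMeasurable)]
  have hreal : (∫ y, u y ^ q) ^ (1/p) ≤ 6 * (C:ℝ) ^ (1/p) * R := by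
    rw [hIq, ENNReal.toReal_rpow]
    exact ENNReal.toReal_le_of_le_ofReal (by positivity) finalE
  rw [hinvp]
  have hfrac : ((C:ℝ)) ^ (1/p) ≤ ((C:ℝ) + 1) ^ (1/p) :=
    Real.rpow_le_rpow (by positivity) (by linarith) (by positivity)
  have hS6 : (0:ℝ) < 6 * ((C:ℝ) + 1) ^ (1/p) := by positivity
  calc (6 * ((C:ℝ) + 1) ^ (1/p))⁻¹ * (∫ y, u y ^ q) ^ (1/p)
      ≤ (6 * ((C:ℝ) + 1) ^ (1/p))⁻¹ * (6 * (C:ℝ) ^ (1/p) * R) := by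
        refine mul_le_mul_of_nonneg_left hreal (by positivity)
    _ ≤ R := by
        rw [← mul_assoc]
        have : (6 * ((C:ℝ) + 1) ^ (1/p))⁻¹ * (6 * (C:ℝ) ^ (1/p)) ≤ 1 := by
          rw [inv_mul_le_iff₀ hS6, mul_one]
          exact mul_le_mul_of_nonneg_left hfrac (by norm_num)
        calc (6 * ((C:ℝ) + 1) ^ (1/p))⁻¹ * (6 * (C:ℝ) ^ (1/p)) * R ≤ 1 * R :=
              mul_le_mul_of_nonneg_right this hR0
          _ = R := one_mul R
    _ ≤ ε * A + (9/ε) * B := by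
        rw [hR]
        have h1 : ε/2 * A ≤ ε * A := by nlinarith
        have h2 : 1/(2*ε) * B ≤ 9/ε * B := by
          refine mul_le_mul_of_nonneg_right ?_ hB0
          rw [div_le_div_iff₀ (by positivity) hε]
          nlinarith
        linarith

set_option maxHeartbeats 1000000 in
lemma lipschitz_case (N : ℕ) (hN : 2 ≤ N) :
    ∃ S : ℝ, 0 < S ∧ ∀ (u : Euc N → ℝ) (K : ℝ≥0), LipschitzWith K u →
      HasCompactSupport u → (∀ y, 0 ≤ u y) → (∀ y, u y ≤ 1) → ∀ ε : ℝ, 0 < ε →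
      S * (∫ y, u y ^ ((2 * (N:ℝ)) / ((N:ℝ) - 1))) ^ (((N:ℝ) - 1) / (N:ℝ))
        ≤ ε * (∫ y, ‖fderiv ℝ u y‖ ^ 2) + (9 / ε) * ∫ y, (u y) ^ 2 * (1 - u y) ^ 2 := by
  obtain ⟨S, hS, hsm⟩ := smooth_case N hN
  refine ⟨S, hS, ?_⟩
  intro u K hL hcu h0 h1 ε hε
  have hu : Continuous u := hL.continuous
  have hN1 : (1:ℝ) < (N:ℝ) := by exact_mod_cast lt_of_lt_of_le one_lt_two hN
  set q : ℝ := (2 * (N:ℝ)) / ((N:ℝ) - 1) with hqdef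
  set r : ℝ := ((N:ℝ) - 1) / (N:ℝ) with hrdef
  have hq0 : (0:ℝ) < q := by
    rw [hqdef]; exact div_pos (by linarith) (by linarith)
  have hr0 : (0:ℝ) ≤ r := by
    rw [hrdef]; exact le_of_lt (div_pos (by linarith) (by linarith))
  -- bump functions
  set φ : ℕ → ContDiffBump (0 : Euc N) := fun n =>
    ⟨((n:ℝ)+1)⁻¹/2, ((n:ℝ)+1)⁻¹, by positivity, by
      rw [div_lt_iff₀ (by norm_num)]
      nlinarith [inv_pos.2 (by positivity : (0:ℝ) < (n:ℝ)+1)]⟩ with hφdef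
  set w : ℕ → Euc N → ℝ := fun n => (φ n).normed volume ⋆[ContinuousLinearMap.lsmul ℝ ℝ] u
    with hwdef
  have hwx : ∀ n z, w n z = ∫ t, (φ n).normed volume t * u (z - t) := by
    intro n z; simp [hwdef, convolution, ContinuousLinearMap.lsmul_apply]
  have hwC : ∀ n, ContDiff ℝ 1 (w n) := fun n =>
    ((φ n).hasCompactSupport_normed).contDiff_convolution_left _ (φ n).contDiff_normed
      hu.locallyIntegrable
  have hwcs : ∀ n, HasCompactSupport (w n) := fun n =>
    ((φ n).hasCompactSupport_normed).convolution _ hcu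
  have hw0 : ∀ n y, 0 ≤ w n y := by
    intro n y
    rw [hwx]
    exact integral_nonneg fun t => mul_nonneg ((φ n).nonneg_normed t) (h0 _)
  have hw1 : ∀ n y, w n y ≤ 1 := by
    intro n y
    rw [hwx]
    calc ∫ t, (φ n).normed volume t * u (y - t) ≤ ∫ t, (φ n).normed volume t := by
          refine integral_mono (conv_integrand_integrable (φ n) hu h0 h1 y)
            ((φ n).integrable_normed) fun t => ?_
          nlinarith [(φ n).nonneg_normed (μ := volume) t, h1 (y - t), h0 (y - t)]
      _ = 1 := (φ n).integral_normed
  -- pointwise convergence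
  have hφr : Tendsto (fun n => (φ n).rOut) atTop (𝓝 0) := by
    have : (fun n : ℕ => ((n:ℝ)+1)⁻¹) = fun n : ℕ => 1/((n:ℝ)+1) := by
      ext n; rw [one_div]
    simpa [hφdef, this] using tendsto_one_div_add_atTop_nhds_zero_nat
  have hwtend : ∀ x, Tendsto (fun n => w n x) atTop (𝓝 (u x)) := fun x =>
    ContDiffBump.convolution_tendsto_right_of_continuous hφr hu x
  -- common compact support
  set s : Set (Euc N) := closedBall (0 : Euc N) 1 + tsupport u with hsdef
  have hscomp : IsCompact s := (isCompact_closedBall _ _).add hcu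
  have hssupp : ∀ n, support (w n) ⊆ s := by
    intro n
    refine (support_convolution_subset _).trans ?_
    refine add_subset_add ?_ (subset_tsupport u)
    rw [(φ n).support_normed_eq]
    refine ball_subset_closedBall.trans (closedBall_subset_closedBall ?_)
    show ((n:ℝ)+1)⁻¹ ≤ 1
    rw [inv_le_one_iff₀]
    right; linarith [Nat.cast_nonneg (α := ℝ) n]
  -- dominated convergence
  have hbound_int : Integrable (s.indicator fun _ => (1:ℝ)) :=
    (integrableOn_const hscomp.measure_lt_top.ne).integrable_indicator
      hscomp.measurableSet
  have hwzero : ∀ n x, x ∉ s → w n x = 0 := fun n x hx => by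
    by_contra h; exact hx (hssupp n (mem_support.2 h))
  have hLtend : Tendsto (fun n => ∫ y, w n y ^ q) atTop (𝓝 (∫ y, u y ^ q)) := by
    refine tendsto_integral_of_dominated_convergence (s.indicator fun _ => (1:ℝ))
      ?_ hbound_int ?_ ?_
    · intro n
      exact (((Real.continuous_rpow_const (le_of_lt hq0)).comp
        ((hwC n).continuous)).aestronglyMeasurable)
    · intro n
      refine Eventually.of_forall fun x => ?_
      rw [Real.norm_eq_abs, abs_of_nonneg (Real.rpow_nonneg (hw0 n x) q)]
      by_cases hx : x ∈ s
      · rw [indicator_of_mem hx]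
        exact Real.rpow_le_one (hw0 n x) (hw1 n x) (le_of_lt hq0)
      · rw [indicator_of_notMem hx, hwzero n x hx, Real.zero_rpow (ne_of_gt hq0)]
    · refine Eventually.of_forall fun x => ?_
      exact ((Real.continuous_rpow_const (le_of_lt hq0)).continuousAt.tendsto).comp (hwtend x)
  have hBtend : Tendsto (fun n => ∫ y, (w n y)^2 * (1 - w n y)^2) atTop
      (𝓝 (∫ y, (u y)^2*(1-u y)^2)) := by
    refine tendsto_integral_of_dominated_convergence (s.indicator fun _ => (1:ℝ))
      ?_ hbound_int ?_ ?_
    · intro n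
      exact ((((hwC n).continuous.pow 2).mul
        ((continuous_const.sub (hwC n).continuous).pow 2)).aestronglyMeasurable)
    · intro n
      refine Eventually.of_forall fun x => ?_
      rw [Real.norm_eq_abs, abs_of_nonneg (by positivity)]
      by_cases hx : x ∈ s
      · rw [indicator_of_mem hx]
        have h2 : (w n x) ^ 2 ≤ 1 := pow_le_one₀ (hw0 n x) (hw1 n x)
        have h3 : (1 - w n x) ^ 2 ≤ 1 := pow_le_one₀ (by linarith [hw1 n x]) (by linarith [hw0 n x])
        nlinarith [sq_nonneg (w n x), sq_nonneg (1 - w n x)]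
      · rw [indicator_of_notMem hx, hwzero n x hx]; norm_num
    · refine Eventually.of_forall fun x => ?_
      exact (((hwtend x).pow 2).mul ((tendsto_const_nhds.sub (hwtend x)).pow 2))
  have hineq : ∀ n, S * (∫ y, w n y ^ q) ^ r
      ≤ ε * (∫ y, ‖fderiv ℝ u y‖^2) + (9/ε) * ∫ y, (w n y)^2*(1 - w n y)^2 := by
    intro n
    refine (hsm (w n) (hwC n) (hwcs n) (hw0 n) (hw1 n) ε hε).trans ?_
    have hgb := grad_sq_bound (φ n) hL hcu h0 h1
    have h2 : ε * (∫ x, ‖fderiv ℝ (w n) x‖^2) ≤ ε * ∫ x, ‖fderiv ℝ u x‖^2 :=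
      mul_le_mul_of_nonneg_left hgb (le_of_lt hε)
    linarith
  have hT1 : Tendsto (fun n => S * (∫ y, w n y ^ q) ^ r) atTop
      (𝓝 (S * (∫ y, u y ^ q) ^ r)) :=
    (((Real.continuous_rpow_const hr0).continuousAt.tendsto).comp hLtend).const_mul S
  have hT2 : Tendsto (fun n => ε * (∫ y, ‖fderiv ℝ u y‖^2)
        + (9/ε) * ∫ y, (w n y)^2*(1 - w n y)^2)
      atTop (𝓝 (ε * (∫ y, ‖fderiv ℝ u y‖^2) + (9/ε) * ∫ y, (u y)^2*(1-u y)^2)) :=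
    tendsto_const_nhds.add (hBtend.const_mul _)
  exact le_of_tendsto_of_tendsto' hT1 hT2 hineq

end AuxSobolev

/-- the quantitative Sobolev-type lower bound used in the
Γ-liminf part of the Modica–Mortola approximation: there is a dimensional
constant S_N > 0 such that for every bounded open D, every ε > 0 and every
Lipschitz, compactly supported u : ℝ^N → [0,1] with support in D,
S_N (∫_D u^{2N/(N−1)})^{(N−1)/N} ≤ ε∫_D |∇u|² + (9/ε)∫_D u²(1−u)². -/
theorem stmt_15 (N : ℕ) (hN : 2 ≤ N) :
    ∃ S : ℝ, 0 < S ∧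
      ∀ (D : Set (Euc N)), IsOpen D → Bornology.IsBounded D →
      ∀ ε : ℝ, 0 < ε →
      ∀ u : Euc N → ℝ, (∃ K : ℝ≥0, LipschitzWith K u) →
        HasCompactSupport u → tsupport u ⊆ D →
        (∀ y, 0 ≤ u y) → (∀ y, u y ≤ 1) →
        S * (∫ y in D, u y ^ ((2 * (N : ℝ)) / ((N : ℝ) - 1)))
              ^ (((N : ℝ) - 1) / (N : ℝ))
          ≤ ε * (∫ y in D, ‖fderiv ℝ u y‖ ^ 2)
            + (9 / ε) * ∫ y in D, (u y) ^ 2 * (1 - u y) ^ 2 := by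
  obtain ⟨S, hS, hmain⟩ := lipschitz_case N hN
  refine ⟨S, hS, ?_⟩
  intro D hD hDb ε hε u hKex hcs hsub h0 h1
  obtain ⟨K, hK⟩ := hKex
  have hN1 : (1:ℝ) < (N:ℝ) := by exact_mod_cast lt_of_lt_of_le one_lt_two hN
  have h2 : ∀ x, x ∉ D → u x = 0 := fun x hx =>
    image_eq_zero_of_notMem_tsupport (fun h => hx (hsub h))
  have e1 : ∫ y in D, u y ^ ((2 * (N:ℝ)) / ((N:ℝ) - 1))
      = ∫ y, u y ^ ((2 * (N:ℝ)) / ((N:ℝ) - 1)) := by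
    refine setIntegral_eq_integral_of_forall_compl_eq_zero fun x hx => ?_
    rw [h2 x hx, Real.zero_rpow]
    refine ne_of_gt (div_pos (by linarith) (by linarith))
  have e2 : ∫ y in D, ‖fderiv ℝ u y‖ ^ 2 = ∫ y, ‖fderiv ℝ u y‖ ^ 2 := by
    refine setIntegral_eq_integral_of_forall_compl_eq_zero fun x hx => ?_
    have hz : fderiv ℝ u x = 0 := by
      by_contra h
      exact hx (hsub (support_fderiv_subset ℝ (mem_support.2 h)))
    simp [hz]
  have e3 : ∫ y in D, (u y) ^ 2 * (1 - u y) ^ 2 = ∫ y, (u y) ^ 2 * (1 - u y) ^ 2 := by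
    refine setIntegral_eq_integral_of_forall_compl_eq_zero fun x hx => ?_
    rw [h2 x hx]
    norm_num
  rw [e1, e2, e3]
  exact hmain u K hK hcs h0 h1 ε hε
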